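/- Let G, H, K be finite groups, X ≤ G×H and Y' ≤ Y ≤ H×K subgroups, M a left 𝕜X-module and N' a left 𝕜Y'-module. There is a 𝕜[X*Y]-module homomorphism α₂ : Ind_{X*Y'}^{X*Y}(M ⊗^{X,Y'}_{𝕜H} N') → M ⊗^{X,Y}_{𝕜H} Ind_{Y'}^{Y}(N') sending (g,k)⊗(m⊗n') to (g,h)m ⊗ ((h,k)⊗n'), for (g,k) ∈ X*Y, m ∈ M, n' ∈ N', where h ∈ H is chosen with (g,h) ∈ X and (h,k) ∈ Y; α₂ is natural in M and N', and if p₁(Y) ≤ p₂(X) then α₂ is an isomorphism. -/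

import Mathlib

namespace Stmt10

/-- `k₁(X) = {g ∈ G ∣ (g,1) ∈ X}`. -/
def k1 {G H : Type*} [Group G] [Group H] (X : Subgroup (G × H)) : Subgroup G :=
  X.comap (MonoidHom.inl G H)

/-- `k₂(X) = {h ∈ H ∣ (1,h) ∈ X}`. -/
def k2 {G H : Type*} [Group G] [Group H] (X : Subgroup (G × H)) : Subgroup H :=
  X.comap (MonoidHom.inr G H)

/-- `p₁(X)`, the image of `X` under the first projection. -/
def p1 {G H : Type*} [Group G] [Group H] (X : Subgroup (G × H)) : Subgroup G :=
  X.map (MonoidHom.fst G H)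

/-- `p₂(X)`, the image of `X` under the second projection. -/
def p2 {G H : Type*} [Group G] [Group H] (X : Subgroup (G × H)) : Subgroup H :=
  X.map (MonoidHom.snd G H)

/-- The opposite subgroup `X° = {(h,g) ∣ (g,h) ∈ X}`. -/
def opp {G H : Type*} [Group G] [Group H] (X : Subgroup (G × H)) : Subgroup (H × G) :=
  X.map ((MulEquiv.prodComm : (G × H) ≃* (H × G)).toMonoidHom)

/-- The composition `X*Y` of subgroup correspondences. -/
def comp {G H K : Type*} [Group G] [Group H] [Group K]
    (X : Subgroup (G × H)) (Y : Subgroup (H × K)) : Subgroup (G × K) where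
  carrier := {gk | ∃ h : H, (gk.1, h) ∈ X ∧ (h, gk.2) ∈ Y}
  one_mem' := ⟨1, X.one_mem, Y.one_mem⟩
  mul_mem' := by
    rintro ⟨g, k⟩ ⟨g', k'⟩ ⟨h, hX, hY⟩ ⟨h', hX', hY'⟩
    exact ⟨h * h', X.mul_mem hX hX', Y.mul_mem hY hY'⟩
  inv_mem' := by
    rintro ⟨g, k⟩ ⟨h, hX, hY⟩
    exact ⟨h⁻¹, X.inv_mem hX, Y.inv_mem hY⟩

lemma mem_comp {G H K : Type*} [Group G] [Group H] [Group K]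
    {X : Subgroup (G × H)} {Y : Subgroup (H × K)} {x : G × K} :
    x ∈ comp X Y ↔ ∃ h : H, (x.1, h) ∈ X ∧ (h, x.2) ∈ Y := Iff.rfl

lemma mem_opp {G H : Type*} [Group G] [Group H] {X : Subgroup (G × H)} {x : H × G} :
    x ∈ opp X ↔ (x.2, x.1) ∈ X := by
  rw [opp, Subgroup.mem_map]
  constructor
  · rintro ⟨⟨g, h⟩, hgh, rfl⟩
    simpa using hgh
  · intro hx
    exact ⟨(x.2, x.1), hx, rfl⟩

/-- The diagonal subgroup `Δ(P) = {(g,g) ∣ g ∈ P} ≤ G × G`. -/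
def diag {G : Type*} [Group G] (P : Subgroup G) : Subgroup (G × G) :=
  (P.subtype.prod P.subtype).range

/-- The twisted diagonal subgroup `Δ(P,φ,Q) = {(φ y, y) ∣ y ∈ Q} ≤ G × H`. -/
def tdiag {G H : Type*} [Group G] [Group H] (P : Subgroup G) (Q : Subgroup H)
    (φ : Q ≃* P) : Subgroup (G × H) :=
  ((P.subtype.comp φ.toMonoidHom).prod Q.subtype).range

open scoped TensorProduct

section ExtendedTensor

variable {𝕜 : Type*} [CommRing 𝕜]

/-- The submodule of relations defining the balanced tensor product
`M ⊗_{𝕜[k₂(X)∩k₁(Y)]} N` over the middle group: it is spanned by the elements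
`(m·b) ⊗ n - m ⊗ (b·n)` with `b ∈ k₂(X)∩k₁(Y)`, where `m·b = (1,b⁻¹)·m` and
`b·n = (b,1)·n`. -/
def midRel {A B C : Type*} [Group A] [Group B] [Group C]
    {M N : Type*} [AddCommGroup M] [Module 𝕜 M] [AddCommGroup N] [Module 𝕜 N]
    (X : Subgroup (A × B)) (Y : Subgroup (B × C))
    (ρ : Representation 𝕜 ↥X M) (σ : Representation 𝕜 ↥Y N) :
    Submodule 𝕜 (M ⊗[𝕜] N) :=
  Submodule.span 𝕜 {z | ∃ (b : B) (h1 : (((1 : A), b⁻¹) : A × B) ∈ X)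
    (h2 : ((b, (1 : C)) : B × C) ∈ Y) (m : M) (n : N),
      z = (ρ ⟨((1 : A), b⁻¹), h1⟩ m) ⊗ₜ[𝕜] n - m ⊗ₜ[𝕜] (σ ⟨(b, (1 : C)), h2⟩ n)}

/-- The underlying `𝕜`-module of the extended tensor product `M ⊗^{X,Y}_{𝕜B} N`. -/
abbrev ExtTen {A B C : Type*} [Group A] [Group B] [Group C]
    {M N : Type*} [AddCommGroup M] [Module 𝕜 M] [AddCommGroup N] [Module 𝕜 N]
    (X : Subgroup (A × B)) (Y : Subgroup (B × C))
    (ρ : Representation 𝕜 ↥X M) (σ : Representation 𝕜 ↥Y N) :=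
  (M ⊗[𝕜] N) ⧸ midRel X Y ρ σ

/-- The canonical projection onto the extended tensor product. -/
def extMk {A B C : Type*} [Group A] [Group B] [Group C]
    {M N : Type*} [AddCommGroup M] [Module 𝕜 M] [AddCommGroup N] [Module 𝕜 N]
    (X : Subgroup (A × B)) (Y : Subgroup (B × C))
    (ρ : Representation 𝕜 ↥X M) (σ : Representation 𝕜 ↥Y N) :
    (M ⊗[𝕜] N) →ₗ[𝕜] ExtTen X Y ρ σ :=
  (midRel X Y ρ σ).mkQ

/-- The `𝕜`-module `LHom^{X,Y}_{𝕜A}(M,N) = Hom_{𝕜[k₁(X)∩k₁(Y)]}(M,N)` of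
`𝕜`-linear maps commuting with the actions of `k₁(X)∩k₁(Y)` (via `(a,1)`). -/
def lHomSub {A B C : Type*} [Group A] [Group B] [Group C]
    {M N : Type*} [AddCommGroup M] [Module 𝕜 M] [AddCommGroup N] [Module 𝕜 N]
    (X : Subgroup (A × B)) (Y : Subgroup (A × C))
    (ρ : Representation 𝕜 ↥X M) (σ : Representation 𝕜 ↥Y N) :
    Submodule 𝕜 (M →ₗ[𝕜] N) where
  carrier := {f | ∀ (a : A) (h1 : ((a, (1 : B)) : A × B) ∈ X)
      (h2 : ((a, (1 : C)) : A × C) ∈ Y) (m : M),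
        f (ρ ⟨(a, 1), h1⟩ m) = σ ⟨(a, 1), h2⟩ (f m)}
  add_mem' := by
    intro f g hf hg a h1 h2 m
    simp only [LinearMap.add_apply, hf a h1 h2 m, hg a h1 h2 m, map_add]
  zero_mem' := by
    intro a h1 h2 m
    simp
  smul_mem' := by
    intro c f hf a h1 h2 m
    simp only [LinearMap.smul_apply, hf a h1 h2 m, map_smul]

/-- The `𝕜`-module `RHom^{X,Y}_{𝕜A}(M,N) = Hom_{𝕜[k₂(X)∩k₂(Y)]}(M,N)` of
`𝕜`-linear maps commuting with the actions of `k₂(X)∩k₂(Y)` (via `(1,a)`). -/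
def rHomSub {A B C : Type*} [Group A] [Group B] [Group C]
    {M N : Type*} [AddCommGroup M] [Module 𝕜 M] [AddCommGroup N] [Module 𝕜 N]
    (X : Subgroup (B × A)) (Y : Subgroup (C × A))
    (ρ : Representation 𝕜 ↥X M) (σ : Representation 𝕜 ↥Y N) :
    Submodule 𝕜 (M →ₗ[𝕜] N) where
  carrier := {f | ∀ (a : A) (h1 : (((1 : B), a) : B × A) ∈ X)
      (h2 : (((1 : C), a) : C × A) ∈ Y) (m : M),
        f (ρ ⟨(1, a), h1⟩ m) = σ ⟨(1, a), h2⟩ (f m)}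
  add_mem' := by
    intro f g hf hg a h1 h2 m
    simp only [LinearMap.add_apply, hf a h1 h2 m, hg a h1 h2 m, map_add]
  zero_mem' := by
    intro a h1 h2 m
    simp
  smul_mem' := by
    intro c f hf a h1 h2 m
    simp only [LinearMap.smul_apply, hf a h1 h2 m, map_smul]

/-- The `𝕜`-module of `𝕜I`-linear maps between two representations of a group
`I`, e.g. `Hom_{𝕜[X*X°]}(-,-)` or `Hom_{𝕜X}(-,-)`. -/
def fullHomSub {I : Type*} [Group I]
    {M N : Type*} [AddCommGroup M] [Module 𝕜 M] [AddCommGroup N] [Module 𝕜 N]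
    (ρ : Representation 𝕜 I M) (σ : Representation 𝕜 I N) :
    Submodule 𝕜 (M →ₗ[𝕜] N) where
  carrier := {f | ∀ (x : I) (m : M), f (ρ x m) = σ x (f m)}
  add_mem' := by
    intro f g hf hg x m
    simp only [LinearMap.add_apply, hf x m, hg x m, map_add]
  zero_mem' := by
    intro x m
    simp
  smul_mem' := by
    intro c f hf x m
    simp only [LinearMap.smul_apply, hf x m, map_smul]

/-- Relations defining the induced module `Ind_{X'}^{X}(M') = 𝕜X ⊗_{𝕜X'} M'`:
spanned by `(b·a) ⊗ m - b ⊗ (a·m)` for `a ∈ X'`, `b ∈ X`. -/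
noncomputable def indRel {I : Type*} [Group I] (X' X : Subgroup I)
    {M' : Type*} [AddCommGroup M'] [Module 𝕜 M']
    (ρ' : Representation 𝕜 ↥X' M') :
    Submodule 𝕜 (MonoidAlgebra 𝕜 ↥X ⊗[𝕜] M') :=
  Submodule.span 𝕜 {z | ∃ (b : ↥X) (a : I) (h1 : a ∈ X') (h2 : a ∈ X) (m : M'),
    z = (MonoidAlgebra.single (b * ⟨a, h2⟩) (1 : 𝕜)) ⊗ₜ[𝕜] m -
        (MonoidAlgebra.single b (1 : 𝕜)) ⊗ₜ[𝕜] (ρ' ⟨a, h1⟩ m)}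

/-- The underlying `𝕜`-module of the induced module `Ind_{X'}^{X}(M')`. -/
abbrev Ind {I : Type*} [Group I] (X' X : Subgroup I)
    {M' : Type*} [AddCommGroup M'] [Module 𝕜 M']
    (ρ' : Representation 𝕜 ↥X' M') :=
  (MonoidAlgebra 𝕜 ↥X ⊗[𝕜] M') ⧸ indRel X' X ρ'

/-- The canonical projection onto the induced module. -/
noncomputable def indMk {I : Type*} [Group I] (X' X : Subgroup I)
    {M' : Type*} [AddCommGroup M'] [Module 𝕜 M']
    (ρ' : Representation 𝕜 ↥X' M') :
    (MonoidAlgebra 𝕜 ↥X ⊗[𝕜] M') →ₗ[𝕜] Ind X' X ρ' :=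
  (indRel X' X ρ').mkQ

end ExtendedTensor

section Homs

variable {G H : Type*} [Group G] [Group H]

lemma k1_prod_mem {X : Subgroup (G × H)} (u : ↥(k1 X)) :
    (((u : G), (1 : H)) : G × H) ∈ X := u.2

lemma k1_inv_prod_mem {X : Subgroup (G × H)} (u : ↥(k1 X)) :
    (((u : G)⁻¹, (1 : H)) : G × H) ∈ X := by
  simpa using X.inv_mem (k1_prod_mem u)

lemma k2_prod_mem {X : Subgroup (G × H)} (u : ↥(k2 X)) :
    (((1 : G), (u : H)) : G × H) ∈ X := u.2

/-- The embedding `k₁(X) →* X`, `u ↦ (u,1)`. -/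
def k1Hom (X : Subgroup (G × H)) : ↥(k1 X) →* ↥X where
  toFun u := ⟨((u : G), (1 : H)), u.2⟩
  map_one' := rfl
  map_mul' u v := Subtype.ext (by simp)

/-- The embedding `k₁(X) →* X°`, `u ↦ (1,u)`, giving the right `𝕜[k₁(X)]`-module
structure (read as a left module) on left `𝕜X°`-modules. -/
def k1HomOp (X : Subgroup (G × H)) : ↥(k1 X) →* ↥(opp X) where
  toFun u := ⟨((1 : H), (u : G)), mem_opp.mpr u.2⟩
  map_one' := rfl
  map_mul' u v := Subtype.ext (by simp)

/-- The embedding `k₂(X) →* X`, `u ↦ (1,u)`. -/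
def k2Hom (X : Subgroup (G × H)) : ↥(k2 X) →* ↥X where
  toFun u := ⟨((1 : G), (u : H)), u.2⟩
  map_one' := rfl
  map_mul' u v := Subtype.ext (by simp)

end Homs


section Aux

open MonoidAlgebra

variable {𝕜 : Type*} [CommRing 𝕜]

lemma indMk_rel {I : Type*} [Group I] (X' X : Subgroup I)
    {M' : Type*} [AddCommGroup M'] [Module 𝕜 M']
    (ρ' : Representation 𝕜 ↥X' M') (b : ↥X) (a : I) (h1 : a ∈ X') (h2 : a ∈ X) (m : M') :
    indMk X' X ρ' ((MonoidAlgebra.single (b * ⟨a, h2⟩) (1:𝕜)) ⊗ₜ[𝕜] m) =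
      indMk X' X ρ' ((MonoidAlgebra.single b (1:𝕜)) ⊗ₜ[𝕜] (ρ' ⟨a, h1⟩ m)) := by
  unfold indMk
  rw [Submodule.mkQ_apply, Submodule.mkQ_apply, Submodule.Quotient.eq]
  exact Submodule.subset_span ⟨b, a, h1, h2, m, rfl⟩

lemma extMk_rel {A B C : Type*} [Group A] [Group B] [Group C]
    {M N : Type*} [AddCommGroup M] [Module 𝕜 M] [AddCommGroup N] [Module 𝕜 N]
    (X : Subgroup (A × B)) (Y : Subgroup (B × C))
    (ρ : Representation 𝕜 ↥X M) (σ : Representation 𝕜 ↥Y N)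
    (b : B) (h1 : (((1 : A), b⁻¹) : A × B) ∈ X) (h2 : ((b, (1 : C)) : B × C) ∈ Y)
    (m : M) (n : N) :
    extMk X Y ρ σ ((ρ ⟨((1:A), b⁻¹), h1⟩ m) ⊗ₜ[𝕜] n) =
      extMk X Y ρ σ (m ⊗ₜ[𝕜] (σ ⟨(b, (1:C)), h2⟩ n)) := by
  unfold extMk
  rw [Submodule.mkQ_apply, Submodule.mkQ_apply, Submodule.Quotient.eq]
  exact Submodule.subset_span ⟨b, h1, h2, m, n, rfl⟩

lemma extMk_rel' {A B C : Type*} [Group A] [Group B] [Group C]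
    {M N : Type*} [AddCommGroup M] [Module 𝕜 M] [AddCommGroup N] [Module 𝕜 N]
    (X : Subgroup (A × B)) (Y : Subgroup (B × C))
    (ρ : Representation 𝕜 ↥X M) (σ : Representation 𝕜 ↥Y N)
    (b : B) (h1 : (((1 : A), b) : A × B) ∈ X) (h2 : ((b⁻¹, (1 : C)) : B × C) ∈ Y)
    (m : M) (n : N) :
    extMk X Y ρ σ ((ρ ⟨((1:A), b), h1⟩ m) ⊗ₜ[𝕜] n) =
      extMk X Y ρ σ (m ⊗ₜ[𝕜] (σ ⟨(b⁻¹, (1:C)), h2⟩ n)) := by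
  have h1' : (((1 : A), (b⁻¹)⁻¹) : A × B) ∈ X := by simpa using h1
  have := extMk_rel X Y ρ σ b⁻¹ h1' h2 m n
  have he : (⟨((1:A), (b⁻¹)⁻¹), h1'⟩ : ↥X) = ⟨((1:A), b), h1⟩ := Subtype.ext (by simp)
  rwa [he] at this

end Aux

section Alpha

variable {𝕜 : Type*} [CommRing 𝕜]
variable {G H K : Type*} [Group G] [Group H] [Group K]
variable (X : Subgroup (G × H)) (Y' Y : Subgroup (H × K))
variable {M N' : Type*} [AddCommGroup M] [Module 𝕜 M] [AddCommGroup N'] [Module 𝕜 N']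
variable (ρM : Representation 𝕜 ↥X M) (ρN' : Representation 𝕜 ↥Y' N')
variable (ρI : Representation 𝕜 ↥Y (Ind Y' Y ρN'))

/-- `(m, n) ↦ (g,h)m ⊗ ((h,k) ⊗ n)`. -/
noncomputable def phi0 (g : G) (k : K) (h : H) (h1 : (g, h) ∈ X) (h2 : (h, k) ∈ Y) :
    (M ⊗[𝕜] N') →ₗ[𝕜] ExtTen X Y ρM ρI :=
  (extMk X Y ρM ρI).comp
    (TensorProduct.map (ρM ⟨(g, h), h1⟩)
      ((indMk Y' Y ρN').comp
        ((TensorProduct.mk 𝕜 (MonoidAlgebra 𝕜 ↥Y) N')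
          (MonoidAlgebra.single (⟨(h, k), h2⟩ : ↥Y) (1 : 𝕜)))))

lemma phi0_apply (g : G) (k : K) (h : H) (h1 : (g, h) ∈ X) (h2 : (h, k) ∈ Y)
    (m : M) (n : N') :
    phi0 X Y' Y ρM ρN' ρI g k h h1 h2 (m ⊗ₜ[𝕜] n) =
      extMk X Y ρM ρI ((ρM ⟨(g, h), h1⟩ m) ⊗ₜ[𝕜]
        (indMk Y' Y ρN' ((MonoidAlgebra.single (⟨(h, k), h2⟩ : ↥Y) (1 : 𝕜)) ⊗ₜ[𝕜] n))) := rfl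

variable (hρI : ∀ (y b : ↥Y) (n : N'),
    ρI y (indMk Y' Y ρN' ((MonoidAlgebra.single b (1 : 𝕜)) ⊗ₜ[𝕜] n)) =
      indMk Y' Y ρN' ((MonoidAlgebra.single (y * b) (1 : 𝕜)) ⊗ₜ[𝕜] n))

include hρI in
lemma phi0_indep (g : G) (k : K) (h h' : H) (h1 : (g, h) ∈ X) (h2 : (h, k) ∈ Y)
    (h1' : (g, h') ∈ X) (h2' : (h', k) ∈ Y) :
    phi0 X Y' Y ρM ρN' ρI g k h h1 h2 = phi0 X Y' Y ρM ρN' ρI g k h' h1' h2' := by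
  apply TensorProduct.ext'
  intro m n
  rw [phi0_apply, phi0_apply]
  set c : H := h' * h⁻¹ with hc
  have hc1 : (((1 : G), c) : G × H) ∈ X := by
    have hm := X.mul_mem h1' (X.inv_mem h1)
    have e : ((g, h') * (g, h)⁻¹ : G × H) = ((1 : G), c) := by
      simp [Prod.ext_iff, hc]
    rwa [e] at hm
  have hc2 : ((c, (1 : K)) : H × K) ∈ Y := by
    have hm := Y.mul_mem h2' (Y.inv_mem h2)
    have e : ((h', k) * (h, k)⁻¹ : H × K) = (c, (1 : K)) := by
      simp [Prod.ext_iff, hc]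
    rwa [e] at hm
  have key := extMk_rel' X Y ρM ρI c hc1 (by simpa using Y.inv_mem hc2)
    (ρM ⟨(g, h), h1⟩ m)
    (indMk Y' Y ρN' ((MonoidAlgebra.single (⟨(h', k), h2'⟩ : ↥Y) (1 : 𝕜)) ⊗ₜ[𝕜] n))
  have e1 : ρM (⟨((1:G), c), hc1⟩ : ↥X) (ρM ⟨(g, h), h1⟩ m) = ρM ⟨(g, h'), h1'⟩ m := by
    rw [← Module.End.mul_apply, ← map_mul]
    have he : ((⟨((1:G), c), hc1⟩ : ↥X) * ⟨(g, h), h1⟩) = ⟨(g, h'), h1'⟩ := by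
      refine Subtype.ext ?_
      show ((1:G), c) * (g, h) = (g, h')
      simp [Prod.ext_iff, hc]
    rw [he]
  have e2 : ρI (⟨(c⁻¹, (1:K)), by simpa using Y.inv_mem hc2⟩ : ↥Y)
      (indMk Y' Y ρN' ((MonoidAlgebra.single (⟨(h', k), h2'⟩ : ↥Y) (1 : 𝕜)) ⊗ₜ[𝕜] n)) =
      indMk Y' Y ρN' ((MonoidAlgebra.single (⟨(h, k), h2⟩ : ↥Y) (1 : 𝕜)) ⊗ₜ[𝕜] n) := by
    rw [hρI]
    have he : ((⟨(c⁻¹, (1:K)), by simpa using Y.inv_mem hc2⟩ : ↥Y) * ⟨(h', k), h2'⟩) =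
        ⟨(h, k), h2⟩ := by
      refine Subtype.ext ?_
      show (c⁻¹, (1:K)) * (h', k) = (h, k)
      simp [Prod.ext_iff, hc, mul_assoc]
    rw [he]
  rw [e1, e2] at key
  exact key.symm


variable (hY'Y : Y' ≤ Y)

include hρI hY'Y in
lemma phi0_mid (g : G) (k : K) (h : H) (h1 : (g, h) ∈ X) (h2 : (h, k) ∈ Y) :
    midRel X Y' ρM ρN' ≤ LinearMap.ker (phi0 X Y' Y ρM ρN' ρI g k h h1 h2) := by
  rw [midRel, Submodule.span_le]
  rintro z ⟨b, hb1, hb2, m, n, rfl⟩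
  simp only [SetLike.mem_coe, LinearMap.mem_ker, map_sub, sub_eq_zero]
  have h1b : (g, h * b⁻¹) ∈ X := by
    have hm := X.mul_mem h1 hb1
    have e : ((g, h) * ((1 : G), b⁻¹) : G × H) = (g, h * b⁻¹) := by
      simp [Prod.ext_iff]
    rwa [e] at hm
  have h2b : (h * b⁻¹, k) ∈ Y := by
    have hm := Y.mul_mem h2 (hY'Y (Y'.inv_mem hb2))
    have e : ((h, k) * (b, (1 : K))⁻¹ : H × K) = (h * b⁻¹, k) := by
      simp [Prod.ext_iff]
    rwa [e] at hm
  have e1 : phi0 X Y' Y ρM ρN' ρI g k h h1 h2 ((ρM ⟨((1:G), b⁻¹), hb1⟩ m) ⊗ₜ[𝕜] n) =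
      phi0 X Y' Y ρM ρN' ρI g k (h * b⁻¹) h1b h2b (m ⊗ₜ[𝕜] (ρN' ⟨(b, (1:K)), hb2⟩ n)) := by
    rw [phi0_apply, phi0_apply]
    have eM : ρM ⟨(g, h), h1⟩ (ρM ⟨((1:G), b⁻¹), hb1⟩ m) = ρM ⟨(g, h * b⁻¹), h1b⟩ m := by
      rw [← Module.End.mul_apply, ← map_mul]
      have he : ((⟨(g, h), h1⟩ : ↥X) * ⟨((1:G), b⁻¹), hb1⟩) = ⟨(g, h * b⁻¹), h1b⟩ := by
        refine Subtype.ext ?_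
        show (g, h) * ((1:G), b⁻¹) = (g, h * b⁻¹)
        simp [Prod.ext_iff]
      rw [he]
    have eI : indMk Y' Y ρN' ((MonoidAlgebra.single (⟨(h, k), h2⟩ : ↥Y) (1 : 𝕜)) ⊗ₜ[𝕜] n) =
        indMk Y' Y ρN' ((MonoidAlgebra.single (⟨(h * b⁻¹, k), h2b⟩ : ↥Y) (1 : 𝕜)) ⊗ₜ[𝕜]
          (ρN' ⟨(b, (1:K)), hb2⟩ n)) := by
      have := indMk_rel Y' Y ρN' (⟨(h * b⁻¹, k), h2b⟩ : ↥Y) (b, (1:K)) hb2 (hY'Y hb2) n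
      have he : ((⟨(h * b⁻¹, k), h2b⟩ : ↥Y) * ⟨(b, (1:K)), hY'Y hb2⟩) = (⟨(h, k), h2⟩ : ↥Y) := by
        refine Subtype.ext ?_
        show (h * b⁻¹, k) * (b, (1:K)) = (h, k)
        simp [Prod.ext_iff]
      rwa [he] at this
    rw [eM, eI]
  rw [e1]
  rw [phi0_indep X Y' Y ρM ρN' ρI hρI g k (h * b⁻¹) h h1b h2b h1 h2]

/-- `phi1`, the map `phi0` descended to the extended tensor product. -/
noncomputable def phi1 (g : G) (k : K) (h : H) (h1 : (g, h) ∈ X) (h2 : (h, k) ∈ Y) :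
    ExtTen X Y' ρM ρN' →ₗ[𝕜] ExtTen X Y ρM ρI :=
  Submodule.liftQ _ (phi0 X Y' Y ρM ρN' ρI g k h h1 h2)
    (phi0_mid X Y' Y ρM ρN' ρI hρI hY'Y g k h h1 h2)

lemma phi1_apply (g : G) (k : K) (h : H) (h1 : (g, h) ∈ X) (h2 : (h, k) ∈ Y)
    (w : M ⊗[𝕜] N') :
    phi1 X Y' Y ρM ρN' ρI hρI hY'Y g k h h1 h2 (extMk X Y' ρM ρN' w) =
      phi0 X Y' Y ρM ρN' ρI g k h h1 h2 w := rfl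

lemma phi1_indep (g : G) (k : K) (h h' : H) (h1 : (g, h) ∈ X) (h2 : (h, k) ∈ Y)
    (h1' : (g, h') ∈ X) (h2' : (h', k) ∈ Y) :
    phi1 X Y' Y ρM ρN' ρI hρI hY'Y g k h h1 h2 =
      phi1 X Y' Y ρM ρN' ρI hρI hY'Y g k h' h1' h2' := by
  refine Submodule.linearMap_qext _ ?_
  show phi0 X Y' Y ρM ρN' ρI g k h h1 h2 = phi0 X Y' Y ρM ρN' ρI g k h' h1' h2'
  exact phi0_indep X Y' Y ρM ρN' ρI hρI g k h h' h1 h2 h1' h2'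

/-- A chosen middle element for `b ∈ X*Y`. -/
noncomputable def midH (b : ↥(comp X Y)) : H := (mem_comp.mp b.2).choose

lemma midH_mem1 (b : ↥(comp X Y)) : ((b : G × K).1, midH X Y b) ∈ X :=
  (mem_comp.mp b.2).choose_spec.1

lemma midH_mem2 (b : ↥(comp X Y)) : (midH X Y b, (b : G × K).2) ∈ Y :=
  (mem_comp.mp b.2).choose_spec.2

/-- `phi1` with the chosen middle element. -/
noncomputable def phi1c (b : ↥(comp X Y)) :
    ExtTen X Y' ρM ρN' →ₗ[𝕜] ExtTen X Y ρM ρI :=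
  phi1 X Y' Y ρM ρN' ρI hρI hY'Y (b : G × K).1 (b : G × K).2 (midH X Y b)
    (midH_mem1 X Y b) (midH_mem2 X Y b)

lemma phi1c_eq (b : ↥(comp X Y)) (h : H) (h1 : ((b : G × K).1, h) ∈ X)
    (h2 : (h, (b : G × K).2) ∈ Y) :
    phi1c X Y' Y ρM ρN' ρI hρI hY'Y b =
      phi1 X Y' Y ρM ρN' ρI hρI hY'Y (b : G × K).1 (b : G × K).2 h h1 h2 :=
  phi1_indep X Y' Y ρM ρN' ρI hρI hY'Y _ _ _ _ _ _ h1 h2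

/-- The map on `𝕜[X*Y] ⊗ (M ⊗^{X,Y'} N')`. -/
noncomputable def alphaT :
    (MonoidAlgebra 𝕜 ↥(comp X Y)) ⊗[𝕜] (ExtTen X Y' ρM ρN') →ₗ[𝕜] ExtTen X Y ρM ρI :=
  TensorProduct.lift ((Finsupp.lsum 𝕜 fun b =>
    LinearMap.toSpanSingleton 𝕜 _ (phi1c X Y' Y ρM ρN' ρI hρI hY'Y b)) ∘ₗ
      (MonoidAlgebra.coeffLinearEquiv 𝕜).toLinearMap)

lemma alphaT_single (b : ↥(comp X Y)) (c : 𝕜) (t : ExtTen X Y' ρM ρN') :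
    alphaT X Y' Y ρM ρN' ρI hρI hY'Y ((MonoidAlgebra.single b c) ⊗ₜ[𝕜] t) =
      c • phi1c X Y' Y ρM ρN' ρI hρI hY'Y b t := by
  unfold alphaT
  rw [TensorProduct.lift.tmul, LinearMap.comp_apply, LinearEquiv.coe_coe,
    MonoidAlgebra.coeffLinearEquiv_apply, MonoidAlgebra.coeff_single]
  erw [Finsupp.lsum_single]
  rfl


variable (ρT₁ : Representation 𝕜 ↥(comp X Y') (ExtTen X Y' ρM ρN'))

variable (hρT₁ : ∀ (g : G) (k : K) (hgk : (g, k) ∈ comp X Y') (h : H)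
      (h1 : (g, h) ∈ X) (h2 : (h, k) ∈ Y') (m : M) (n : N'),
      ρT₁ ⟨(g, k), hgk⟩ (extMk X Y' ρM ρN' (m ⊗ₜ[𝕜] n)) =
        extMk X Y' ρM ρN' ((ρM ⟨(g, h), h1⟩ m) ⊗ₜ[𝕜] (ρN' ⟨(h, k), h2⟩ n)))

include hρT₁ in
lemma phi1_comp (g g₀ : G) (k k₀ : K) (h h₀ : H)
    (h1 : (g, h) ∈ X) (h2 : (h, k) ∈ Y) (ha1 : (g₀, h₀) ∈ X) (ha2 : (h₀, k₀) ∈ Y')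
    (haXY' : (g₀, k₀) ∈ comp X Y')
    (h1' : (g * g₀, h * h₀) ∈ X) (h2' : (h * h₀, k * k₀) ∈ Y) :
    phi1 X Y' Y ρM ρN' ρI hρI hY'Y (g * g₀) (k * k₀) (h * h₀) h1' h2' =
      (phi1 X Y' Y ρM ρN' ρI hρI hY'Y g k h h1 h2).comp (ρT₁ ⟨(g₀, k₀), haXY'⟩) := by
  refine Submodule.linearMap_qext _ ?_
  apply TensorProduct.ext'
  intro m n
  simp only [LinearMap.comp_apply, Submodule.mkQ_apply]
  have hmk : (Submodule.Quotient.mk (m ⊗ₜ[𝕜] n) : ExtTen X Y' ρM ρN') =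
      extMk X Y' ρM ρN' (m ⊗ₜ[𝕜] n) := rfl
  rw [hmk, phi1_apply, hρT₁ g₀ k₀ haXY' h₀ ha1 ha2 m n, phi1_apply, phi0_apply, phi0_apply]
  have eM : ρM ⟨(g, h), h1⟩ (ρM ⟨(g₀, h₀), ha1⟩ m) = ρM ⟨(g * g₀, h * h₀), h1'⟩ m := by
    rw [← Module.End.mul_apply, ← map_mul]
    have he : ((⟨(g, h), h1⟩ : ↥X) * ⟨(g₀, h₀), ha1⟩) = ⟨(g * g₀, h * h₀), h1'⟩ :=
      Subtype.ext rfl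
    rw [he]
  have eI : indMk Y' Y ρN'
        ((MonoidAlgebra.single (⟨(h * h₀, k * k₀), h2'⟩ : ↥Y) (1 : 𝕜)) ⊗ₜ[𝕜] n) =
      indMk Y' Y ρN' ((MonoidAlgebra.single (⟨(h, k), h2⟩ : ↥Y) (1 : 𝕜)) ⊗ₜ[𝕜]
        (ρN' ⟨(h₀, k₀), ha2⟩ n)) := by
    have := indMk_rel Y' Y ρN' (⟨(h, k), h2⟩ : ↥Y) (h₀, k₀) ha2 (hY'Y ha2) n
    have he : ((⟨(h, k), h2⟩ : ↥Y) * ⟨(h₀, k₀), hY'Y ha2⟩) = ⟨(h * h₀, k * k₀), h2'⟩ :=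
      Subtype.ext rfl
    rwa [he] at this
  rw [eM, eI]

include hρT₁ in
lemma alphaKer : indRel (comp X Y') (comp X Y) ρT₁ ≤
    LinearMap.ker (alphaT X Y' Y ρM ρN' ρI hρI hY'Y) := by
  rw [indRel, Submodule.span_le]
  rintro z ⟨b, a, ha1, ha2, t, rfl⟩
  simp only [SetLike.mem_coe, LinearMap.mem_ker, map_sub, sub_eq_zero, alphaT_single, one_smul]
  obtain ⟨h₀, hh1, hh2⟩ := mem_comp.mp ha1
  have hb1 := midH_mem1 X Y b
  have hb2 := midH_mem2 X Y b
  have p1' : ((b : G × K).1 * a.1, midH X Y b * h₀) ∈ X := X.mul_mem hb1 hh1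
  have p2' : (midH X Y b * h₀, (b : G × K).2 * a.2) ∈ Y :=
    Y.mul_mem hb2 (hY'Y hh2)
  have e1 : phi1c X Y' Y ρM ρN' ρI hρI hY'Y (b * ⟨a, ha2⟩) =
      phi1 X Y' Y ρM ρN' ρI hρI hY'Y ((b : G × K).1 * a.1) ((b : G × K).2 * a.2)
        (midH X Y b * h₀) p1' p2' :=
    phi1c_eq X Y' Y ρM ρN' ρI hρI hY'Y (b * ⟨a, ha2⟩) (midH X Y b * h₀) p1' p2'
  rw [e1, phi1_comp X Y' Y ρM ρN' ρI hρI hY'Y ρT₁ hρT₁ (b : G × K).1 a.1 (b : G × K).2 a.2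
      (midH X Y b) h₀ hb1 hb2 hh1 hh2 ha1 p1' p2']
  rfl

/-- The homomorphism `α₂`. -/
noncomputable def alphaMap : Ind (comp X Y') (comp X Y) ρT₁ →ₗ[𝕜] ExtTen X Y ρM ρI :=
  Submodule.liftQ _ (alphaT X Y' Y ρM ρN' ρI hρI hY'Y)
    (alphaKer X Y' Y ρM ρN' ρI hρI hY'Y ρT₁ hρT₁)

lemma alphaMap_mk (w : (MonoidAlgebra 𝕜 ↥(comp X Y)) ⊗[𝕜] (ExtTen X Y' ρM ρN')) :
    alphaMap X Y' Y ρM ρN' ρI hρI hY'Y ρT₁ hρT₁ (indMk (comp X Y') (comp X Y) ρT₁ w) =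
      alphaT X Y' Y ρM ρN' ρI hρI hY'Y w := rfl

lemma alphaMap_spec (g : G) (k : K) (hgk : (g, k) ∈ comp X Y) (h : H)
    (h1 : (g, h) ∈ X) (h2 : (h, k) ∈ Y) (m : M) (n : N') :
    alphaMap X Y' Y ρM ρN' ρI hρI hY'Y ρT₁ hρT₁ (indMk (comp X Y') (comp X Y) ρT₁
        ((MonoidAlgebra.single (⟨(g, k), hgk⟩ : ↥(comp X Y)) (1 : 𝕜)) ⊗ₜ[𝕜]
          (extMk X Y' ρM ρN' (m ⊗ₜ[𝕜] n)))) =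
      extMk X Y ρM ρI ((ρM ⟨(g, h), h1⟩ m) ⊗ₜ[𝕜]
        (indMk Y' Y ρN' ((MonoidAlgebra.single (⟨(h, k), h2⟩ : ↥Y) (1 : 𝕜)) ⊗ₜ[𝕜] n))) := by
  rw [alphaMap_mk, alphaT_single, one_smul,
    phi1c_eq X Y' Y ρM ρN' ρI hρI hY'Y ⟨(g, k), hgk⟩ h h1 h2, phi1_apply, phi0_apply]


variable (ρT₂ : Representation 𝕜 ↥(comp X Y) (ExtTen X Y ρM ρI))

variable (hρT₂ : ∀ (g : G) (k : K) (hgk : (g, k) ∈ comp X Y) (h : H)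
      (h1 : (g, h) ∈ X) (h2 : (h, k) ∈ Y) (m : M) (u : Ind Y' Y ρN'),
      ρT₂ ⟨(g, k), hgk⟩ (extMk X Y ρM ρI (m ⊗ₜ[𝕜] u)) =
        extMk X Y ρM ρI ((ρM ⟨(g, h), h1⟩ m) ⊗ₜ[𝕜] (ρI ⟨(h, k), h2⟩ u)))

include hρT₂ in
lemma phi1c_mul (x b : ↥(comp X Y)) :
    phi1c X Y' Y ρM ρN' ρI hρI hY'Y (x * b) =
      (ρT₂ x).comp (phi1c X Y' Y ρM ρN' ρI hρI hY'Y b) := by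
  have hx1 := midH_mem1 X Y x
  have hx2 := midH_mem2 X Y x
  have hb1 := midH_mem1 X Y b
  have hb2 := midH_mem2 X Y b
  have p1' : ((x : G × K).1 * (b : G × K).1, midH X Y x * midH X Y b) ∈ X :=
    X.mul_mem hx1 hb1
  have p2' : (midH X Y x * midH X Y b, (x : G × K).2 * (b : G × K).2) ∈ Y :=
    Y.mul_mem hx2 hb2
  have e1 : phi1c X Y' Y ρM ρN' ρI hρI hY'Y (x * b) =
      phi1 X Y' Y ρM ρN' ρI hρI hY'Y ((x : G × K).1 * (b : G × K).1)
        ((x : G × K).2 * (b : G × K).2) (midH X Y x * midH X Y b) p1' p2' :=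
    phi1c_eq X Y' Y ρM ρN' ρI hρI hY'Y (x * b) (midH X Y x * midH X Y b) p1' p2'
  rw [e1]
  refine Submodule.linearMap_qext _ ?_
  apply TensorProduct.ext'
  intro m n
  simp only [LinearMap.comp_apply, Submodule.mkQ_apply]
  have hmk : (Submodule.Quotient.mk (m ⊗ₜ[𝕜] n) : ExtTen X Y' ρM ρN') =
      extMk X Y' ρM ρN' (m ⊗ₜ[𝕜] n) := rfl
  rw [hmk, phi1_apply, phi0_apply]
  unfold phi1c
  rw [phi1_apply, phi0_apply]
  have key := hρT₂ (x : G × K).1 (x : G × K).2 x.2 (midH X Y x) hx1 hx2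
    (ρM ⟨((b : G × K).1, midH X Y b), hb1⟩ m)
    (indMk Y' Y ρN' ((MonoidAlgebra.single (⟨(midH X Y b, (b : G × K).2), hb2⟩ : ↥Y)
      (1 : 𝕜)) ⊗ₜ[𝕜] n))
  have ex : (⟨((x : G × K).1, (x : G × K).2), x.2⟩ : ↥(comp X Y)) = x := Subtype.ext rfl
  rw [ex] at key
  rw [key, hρI]
  have eM : ρM ⟨((x : G × K).1, midH X Y x), hx1⟩ (ρM ⟨((b : G × K).1, midH X Y b), hb1⟩ m) =
      ρM ⟨((x : G × K).1 * (b : G × K).1, midH X Y x * midH X Y b), p1'⟩ m := by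
    rw [← Module.End.mul_apply, ← map_mul]
    have he : ((⟨((x : G × K).1, midH X Y x), hx1⟩ : ↥X) *
        ⟨((b : G × K).1, midH X Y b), hb1⟩) =
        ⟨((x : G × K).1 * (b : G × K).1, midH X Y x * midH X Y b), p1'⟩ := Subtype.ext rfl
    rw [he]
  have eS : ((⟨(midH X Y x, (x : G × K).2), hx2⟩ : ↥Y) *
      ⟨(midH X Y b, (b : G × K).2), hb2⟩) =
      ⟨(midH X Y x * midH X Y b, (x : G × K).2 * (b : G × K).2), p2'⟩ := Subtype.ext rfl
  rw [eM, eS]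

variable (ρS : Representation 𝕜 ↥(comp X Y) (Ind (comp X Y') (comp X Y) ρT₁))

variable (hρS : ∀ (x b : ↥(comp X Y)) (t : ExtTen X Y' ρM ρN'),
      ρS x (indMk (comp X Y') (comp X Y) ρT₁ ((MonoidAlgebra.single b (1 : 𝕜)) ⊗ₜ[𝕜] t)) =
        indMk (comp X Y') (comp X Y) ρT₁
          ((MonoidAlgebra.single (x * b) (1 : 𝕜)) ⊗ₜ[𝕜] t))

include hρT₂ hρS in
lemma alpha_equivariant (x : ↥(comp X Y)) (u : Ind (comp X Y') (comp X Y) ρT₁) :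
    alphaMap X Y' Y ρM ρN' ρI hρI hY'Y ρT₁ hρT₁ (ρS x u) =
      ρT₂ x (alphaMap X Y' Y ρM ρN' ρI hρI hY'Y ρT₁ hρT₁ u) := by
  have core : ∀ (b : ↥(comp X Y)) (t : ExtTen X Y' ρM ρN'),
      alphaMap X Y' Y ρM ρN' ρI hρI hY'Y ρT₁ hρT₁
          (ρS x (indMk (comp X Y') (comp X Y) ρT₁
            ((MonoidAlgebra.single b (1 : 𝕜)) ⊗ₜ[𝕜] t))) =
        ρT₂ x (alphaMap X Y' Y ρM ρN' ρI hρI hY'Y ρT₁ hρT₁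
          (indMk (comp X Y') (comp X Y) ρT₁
            ((MonoidAlgebra.single b (1 : 𝕜)) ⊗ₜ[𝕜] t))) := by
    intro b t
    rw [hρS, alphaMap_mk, alphaMap_mk, alphaT_single, alphaT_single, one_smul, one_smul,
      phi1c_mul X Y' Y ρM ρN' ρI hρI hY'Y ρT₂ hρT₂ x b]
    rfl
  obtain ⟨w, rfl⟩ : ∃ w, indMk (comp X Y') (comp X Y) ρT₁ w = u :=
    Submodule.mkQ_surjective _ u
  induction w using TensorProduct.induction_on with
  | zero => simp
  | add w₁ w₂ ih₁ ih₂ =>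
    simp only [map_add, ih₁, ih₂]
  | tmul f t =>
    induction f using MonoidAlgebra.induction_linear with
    | zero =>
      rw [show ((0 : MonoidAlgebra 𝕜 ↥(comp X Y)) ⊗ₜ[𝕜] t) = 0 from
        TensorProduct.zero_tmul _ t]
      simp
    | add f₁ f₂ ih₁ ih₂ =>
      rw [TensorProduct.add_tmul]
      simp only [map_add, ih₁, ih₂]
    | single b c =>
      have hsc : (MonoidAlgebra.single b c) ⊗ₜ[𝕜] t =
          c • ((MonoidAlgebra.single b (1 : 𝕜)) ⊗ₜ[𝕜] t) := by
        rw [TensorProduct.smul_tmul']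
        congr 1
        rw [MonoidAlgebra.smul_single', mul_one]
      rw [hsc]
      simp only [map_smul, core b t]


/-! ### The inverse map -/

/-- `(m, n) ↦ (g,k) ⊗ ((g,h)⁻¹ m ⊗ n)`. -/
noncomputable def psi0 (g : G) (k : K) (h : H) (h1 : (g, h) ∈ X) (h2 : (h, k) ∈ Y) :
    (M ⊗[𝕜] N') →ₗ[𝕜] Ind (comp X Y') (comp X Y) ρT₁ :=
  (indMk (comp X Y') (comp X Y) ρT₁).comp
    ((TensorProduct.mk 𝕜 (MonoidAlgebra 𝕜 ↥(comp X Y)) (ExtTen X Y' ρM ρN')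
        (MonoidAlgebra.single (⟨(g, k), ⟨h, h1, h2⟩⟩ : ↥(comp X Y)) (1 : 𝕜))).comp
      ((extMk X Y' ρM ρN').comp
        (TensorProduct.map (ρM ((⟨(g, h), h1⟩ : ↥X)⁻¹)) LinearMap.id)))

lemma psi0_apply (g : G) (k : K) (h : H) (h1 : (g, h) ∈ X) (h2 : (h, k) ∈ Y)
    (m : M) (n : N') :
    psi0 X Y' Y ρM ρN' ρT₁ g k h h1 h2 (m ⊗ₜ[𝕜] n) =
      indMk (comp X Y') (comp X Y) ρT₁
        ((MonoidAlgebra.single (⟨(g, k), ⟨h, h1, h2⟩⟩ : ↥(comp X Y)) (1 : 𝕜)) ⊗ₜ[𝕜]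
          (extMk X Y' ρM ρN' ((ρM ((⟨(g, h), h1⟩ : ↥X)⁻¹) m) ⊗ₜ[𝕜] n))) := rfl

include hρT₁ in
lemma psi0_indep (g g' : G) (k : K) (h : H) (h1 : (g, h) ∈ X) (h1' : (g', h) ∈ X)
    (h2 : (h, k) ∈ Y) :
    psi0 X Y' Y ρM ρN' ρT₁ g k h h1 h2 = psi0 X Y' Y ρM ρN' ρT₁ g' k h h1' h2 := by
  apply TensorProduct.ext'
  intro m n
  rw [psi0_apply, psi0_apply]
  set d : G := g⁻¹ * g' with hd
  have hd1 : ((d, (1 : H)) : G × H) ∈ X := by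
    have hm := X.mul_mem (X.inv_mem h1) h1'
    have e : ((g, h)⁻¹ * (g', h) : G × H) = (d, (1 : H)) := by
      simp [Prod.ext_iff, hd]
    rwa [e] at hm
  have hdXY' : ((d, (1 : K)) : G × K) ∈ comp X Y' := ⟨(1 : H), by simpa using hd1, Y'.one_mem⟩
  have hdXY : ((d, (1 : K)) : G × K) ∈ comp X Y := ⟨(1 : H), by simpa using hd1, Y.one_mem⟩
  have key := indMk_rel (comp X Y') (comp X Y) ρT₁
    (⟨(g, k), ⟨h, h1, h2⟩⟩ : ↥(comp X Y)) (d, (1 : K)) hdXY' hdXY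
    (extMk X Y' ρM ρN' ((ρM ((⟨(g', h), h1'⟩ : ↥X)⁻¹) m) ⊗ₜ[𝕜] n))
  have he : ((⟨(g, k), ⟨h, h1, h2⟩⟩ : ↥(comp X Y)) * ⟨(d, (1 : K)), hdXY⟩) =
      (⟨(g', k), ⟨h, h1', h2⟩⟩ : ↥(comp X Y)) := by
    refine Subtype.ext ?_
    show (g, k) * (d, (1 : K)) = (g', k)
    simp [Prod.ext_iff, hd]
  rw [he] at key
  rw [key]
  congr 1
  congr 1
  rw [hρT₁ d (1 : K) hdXY' (1 : H) (by simpa using hd1) Y'.one_mem]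
  have eN : ρN' (⟨((1:H), (1:K)), Y'.one_mem⟩ : ↥Y') n = n := by
    have : (⟨((1:H), (1:K)), Y'.one_mem⟩ : ↥Y') = 1 := Subtype.ext rfl
    rw [this, map_one, Module.End.one_apply]
  rw [eN]
  rw [← Module.End.mul_apply, ← map_mul]
  have he2 : ((⟨(d, (1:H)), hd1⟩ : ↥X) * (⟨(g', h), h1'⟩ : ↥X)⁻¹) =
      (⟨(g, h), h1⟩ : ↥X)⁻¹ := by
    refine Subtype.ext ?_
    show ((d, (1:H)) : G × H) * ((g', h)⁻¹) = ((g, h)⁻¹ : G × H)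
    simp [Prod.ext_iff, hd, mul_assoc]
  rw [he2]

include hρT₁ in
lemma psi0_comp (g g₀ : G) (k k₀ : K) (h h₀ : H)
    (h1 : (g, h) ∈ X) (h2 : (h, k) ∈ Y) (ha1 : (g₀, h₀) ∈ X) (ha2 : (h₀, k₀) ∈ Y')
    (h1' : (g * g₀, h * h₀) ∈ X) (h2' : (h * h₀, k * k₀) ∈ Y) (hY'Y : Y' ≤ Y) (m : M) (n : N') :
    psi0 X Y' Y ρM ρN' ρT₁ (g * g₀) (k * k₀) (h * h₀) h1' h2' (m ⊗ₜ[𝕜] n) =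
      psi0 X Y' Y ρM ρN' ρT₁ g k h h1 h2 (m ⊗ₜ[𝕜] (ρN' ⟨(h₀, k₀), ha2⟩ n)) := by
  rw [psi0_apply, psi0_apply]
  have haXY' : ((g₀, k₀) : G × K) ∈ comp X Y' := ⟨h₀, ha1, ha2⟩
  have haXY : ((g₀, k₀) : G × K) ∈ comp X Y := ⟨h₀, ha1, hY'Y ha2⟩
  have key := indMk_rel (comp X Y') (comp X Y) ρT₁
    (⟨(g, k), ⟨h, h1, h2⟩⟩ : ↥(comp X Y)) (g₀, k₀) haXY' haXY
    (extMk X Y' ρM ρN' ((ρM ((⟨(g * g₀, h * h₀), h1'⟩ : ↥X)⁻¹) m) ⊗ₜ[𝕜] n))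
  have he : ((⟨(g, k), ⟨h, h1, h2⟩⟩ : ↥(comp X Y)) * ⟨(g₀, k₀), haXY⟩) =
      (⟨(g * g₀, k * k₀), ⟨h * h₀, h1', h2'⟩⟩ : ↥(comp X Y)) := Subtype.ext rfl
  rw [he] at key
  rw [key]
  congr 1
  congr 1
  rw [hρT₁ g₀ k₀ haXY' h₀ ha1 ha2]
  congr 1
  congr 1
  rw [← Module.End.mul_apply, ← map_mul]
  have he2 : ((⟨(g₀, h₀), ha1⟩ : ↥X) * (⟨(g * g₀, h * h₀), h1'⟩ : ↥X)⁻¹) =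
      (⟨(g, h), h1⟩ : ↥X)⁻¹ := by
    refine Subtype.ext ?_
    show ((g₀, h₀) : G × H) * ((g * g₀, h * h₀)⁻¹) = ((g, h)⁻¹ : G × H)
    simp [Prod.ext_iff, mul_assoc]
  rw [he2]

/-- A chosen element of `G` over the first component of `y ∈ Y`, when `p₁(Y) ≤ p₂(X)`. -/
noncomputable def gchP (hp : p1 Y ≤ p2 X) (y : ↥Y) : G × H :=
  (Subgroup.mem_map.mp (hp (Subgroup.mem_map.mpr
    ⟨(y : H × K), y.2, rfl⟩))).choose

lemma gchP_spec (hp : p1 Y ≤ p2 X) (y : ↥Y) :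
    gchP X Y hp y ∈ X ∧ (gchP X Y hp y).2 = (y : H × K).1 :=
  (Subgroup.mem_map.mp (hp (Subgroup.mem_map.mpr
    ⟨(y : H × K), y.2, rfl⟩))).choose_spec

noncomputable def gch (hp : p1 Y ≤ p2 X) (y : ↥Y) : G := (gchP X Y hp y).1

lemma gch_mem (hp : p1 Y ≤ p2 X) (y : ↥Y) : ((gch X Y hp y, (y : H × K).1) : G × H) ∈ X := by
  have hs := gchP_spec X Y hp y
  have e : ((gch X Y hp y, (y : H × K).1) : G × H) = gchP X Y hp y := by
    refine Prod.ext rfl hs.2.symm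
  rw [e]
  exact hs.1

lemma y_mem (y : ↥Y) : (((y : H × K).1, (y : H × K).2) : H × K) ∈ Y := y.2

/-- `psi0` with the chosen group element. -/
noncomputable def psiC (hp : p1 Y ≤ p2 X) (y : ↥Y) :
    (M ⊗[𝕜] N') →ₗ[𝕜] Ind (comp X Y') (comp X Y) ρT₁ :=
  psi0 X Y' Y ρM ρN' ρT₁ (gch X Y hp y) (y : H × K).2 (y : H × K).1
    (gch_mem X Y hp y) (y_mem Y y)

include hρT₁ in
lemma psiC_eq (hp : p1 Y ≤ p2 X) (y : ↥Y) (g : G) (h1 : ((g, (y : H × K).1) : G × H) ∈ X) :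
    psiC X Y' Y ρM ρN' ρT₁ hp y =
      psi0 X Y' Y ρM ρN' ρT₁ g (y : H × K).2 (y : H × K).1 h1 (y_mem Y y) :=
  psi0_indep X Y' Y ρM ρN' ρT₁ hρT₁ _ g _ _ (gch_mem X Y hp y) h1 (y_mem Y y)


/-- The map `𝕜Y ⊗ N' → Hom(M, Ind(M ⊗ N'))`. -/
noncomputable def betaE (hp : p1 Y ≤ p2 X) :
    (MonoidAlgebra 𝕜 ↥Y) ⊗[𝕜] N' →ₗ[𝕜] (M →ₗ[𝕜] Ind (comp X Y') (comp X Y) ρT₁) :=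
  TensorProduct.lift ((Finsupp.lsum 𝕜 fun y =>
    LinearMap.toSpanSingleton 𝕜 _
      ((TensorProduct.curry (psiC X Y' Y ρM ρN' ρT₁ hp y)).flip)) ∘ₗ
      (MonoidAlgebra.coeffLinearEquiv 𝕜).toLinearMap)

lemma betaE_single (hp : p1 Y ≤ p2 X) (y : ↥Y) (c : 𝕜) (n : N') (m : M) :
    betaE X Y' Y ρM ρN' ρT₁ hp ((MonoidAlgebra.single y c) ⊗ₜ[𝕜] n) m =
      c • psiC X Y' Y ρM ρN' ρT₁ hp y (m ⊗ₜ[𝕜] n) := by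
  unfold betaE
  rw [TensorProduct.lift.tmul, LinearMap.comp_apply, LinearEquiv.coe_coe,
    MonoidAlgebra.coeffLinearEquiv_apply, MonoidAlgebra.coeff_single]
  erw [Finsupp.lsum_single]
  rfl

include hρT₁ in
lemma betaE_ker (hp : p1 Y ≤ p2 X) (hY'Y : Y' ≤ Y) :
    indRel Y' Y ρN' ≤ LinearMap.ker (betaE X Y' Y ρM ρN' ρT₁ hp) := by
  rw [indRel, Submodule.span_le]
  rintro z ⟨y, a, ha1, ha2, n, rfl⟩
  simp only [SetLike.mem_coe, LinearMap.mem_ker, map_sub, sub_eq_zero]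
  ext m
  rw [betaE_single, betaE_single, one_smul, one_smul]
  have hg := gch_mem X Y hp y
  have hg0 := gch_mem X Y hp (⟨a, ha2⟩ : ↥Y)
  have p1' : ((gch X Y hp y * gch X Y hp (⟨a, ha2⟩ : ↥Y),
      (y : H × K).1 * a.1) : G × H) ∈ X := X.mul_mem hg hg0
  have e1 := psiC_eq X Y' Y ρM ρN' ρT₁ hρT₁ hp (y * ⟨a, ha2⟩)
    (gch X Y hp y * gch X Y hp (⟨a, ha2⟩ : ↥Y)) p1'
  rw [e1]
  have e2 := psi0_comp X Y' Y ρM ρN' ρT₁ hρT₁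
    (gch X Y hp y) (gch X Y hp (⟨a, ha2⟩ : ↥Y)) ((y : H × K).2) a.2
    ((y : H × K).1) a.1 hg ((y_mem Y y)) hg0 ha1 p1'
    (Y.mul_mem (y_mem Y y) ha2) hY'Y m n
  exact e2


/-- The descended map `Ind_{Y'}^Y N' → Hom(M, S)`. -/
noncomputable def betaB (hp : p1 Y ≤ p2 X) (hY'Y : Y' ≤ Y) :
    Ind Y' Y ρN' →ₗ[𝕜] (M →ₗ[𝕜] Ind (comp X Y') (comp X Y) ρT₁) :=
  Submodule.liftQ _ (betaE X Y' Y ρM ρN' ρT₁ hp)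
    (betaE_ker X Y' Y ρM ρN' ρT₁ hρT₁ hp hY'Y)

lemma betaB_mk (hp : p1 Y ≤ p2 X) (hY'Y : Y' ≤ Y) (w : (MonoidAlgebra 𝕜 ↥Y) ⊗[𝕜] N') :
    betaB X Y' Y ρM ρN' ρT₁ hρT₁ hp hY'Y (indMk Y' Y ρN' w) =
      betaE X Y' Y ρM ρN' ρT₁ hp w := rfl

/-- The map `M ⊗ Ind_{Y'}^Y N' → S`. -/
noncomputable def beta0 (hp : p1 Y ≤ p2 X) (hY'Y : Y' ≤ Y) :
    M ⊗[𝕜] (Ind Y' Y ρN') →ₗ[𝕜] Ind (comp X Y') (comp X Y) ρT₁ :=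
  TensorProduct.lift (betaB X Y' Y ρM ρN' ρT₁ hρT₁ hp hY'Y).flip

lemma beta0_apply (hp : p1 Y ≤ p2 X) (hY'Y : Y' ≤ Y) (m : M) (u : Ind Y' Y ρN') :
    beta0 X Y' Y ρM ρN' ρT₁ hρT₁ hp hY'Y (m ⊗ₜ[𝕜] u) =
      betaB X Y' Y ρM ρN' ρT₁ hρT₁ hp hY'Y u m := rfl

include hρT₁ in
lemma psiC_shift (hp : p1 Y ≤ p2 X) (b : H) (hb1 : (((1:G), b⁻¹) : G × H) ∈ X)
    (hb2 : ((b, (1:K)) : H × K) ∈ Y) (y : ↥Y) (m : M) (n : N') :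
    psiC X Y' Y ρM ρN' ρT₁ hp y ((ρM ⟨((1:G), b⁻¹), hb1⟩ m) ⊗ₜ[𝕜] n) =
      psiC X Y' Y ρM ρN' ρT₁ hp (⟨(b, (1:K)), hb2⟩ * y) (m ⊗ₜ[𝕜] n) := by
  have hg := gch_mem X Y hp y
  have hgb : ((gch X Y hp y, b * (y : H × K).1) : G × H) ∈ X := by
    have hm := X.mul_mem (X.inv_mem hb1) hg
    have e : ((((1:G), b⁻¹) : G × H)⁻¹ * (gch X Y hp y, (y : H × K).1) : G × H) =
        (gch X Y hp y, b * (y : H × K).1) := by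
      simp [Prod.ext_iff]
    rwa [e] at hm
  rw [psiC_eq X Y' Y ρM ρN' ρT₁ hρT₁ hp y (gch X Y hp y) hg]
  rw [psiC_eq X Y' Y ρM ρN' ρT₁ hρT₁ hp (⟨(b, (1:K)), hb2⟩ * y) (gch X Y hp y) hgb]
  rw [psi0_apply, psi0_apply]
  have eM : ρM ((⟨(gch X Y hp y, (y : H × K).1), hg⟩ : ↥X)⁻¹)
      (ρM ⟨((1:G), b⁻¹), hb1⟩ m) =
      ρM ((⟨(gch X Y hp y, b * (y : H × K).1), hgb⟩ : ↥X)⁻¹) m := by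
    rw [← Module.End.mul_apply, ← map_mul]
    have he : ((⟨(gch X Y hp y, (y : H × K).1), hg⟩ : ↥X)⁻¹ * ⟨((1:G), b⁻¹), hb1⟩) =
        (⟨(gch X Y hp y, b * (y : H × K).1), hgb⟩ : ↥X)⁻¹ := by
      refine Subtype.ext ?_
      show ((gch X Y hp y, (y : H × K).1) : G × H)⁻¹ * ((1:G), b⁻¹) =
        ((gch X Y hp y, b * (y : H × K).1) : G × H)⁻¹
      simp [Prod.ext_iff, mul_inv_rev]
    rw [he]
  rw [eM]
  have eS : (⟨(gch X Y hp y, (y : H × K).2),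
      ⟨(y : H × K).1, hg, y_mem Y y⟩⟩ : ↥(comp X Y)) =
      ⟨(gch X Y hp y, ((⟨(b, (1:K)), hb2⟩ * y : ↥Y) : H × K).2),
        ⟨b * (y : H × K).1, hgb, y_mem Y (⟨(b, (1:K)), hb2⟩ * y)⟩⟩ := by
    refine Subtype.ext ?_
    show ((gch X Y hp y, (y : H × K).2) : G × K) = (gch X Y hp y, 1 * (y : H × K).2)
    simp
  rw [eS]
  rfl

include hρT₁ in
lemma beta0_ker (hp : p1 Y ≤ p2 X) (hY'Y : Y' ≤ Y) (hρI : ∀ (y b : ↥Y) (n : N'),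
      ρI y (indMk Y' Y ρN' ((MonoidAlgebra.single b (1 : 𝕜)) ⊗ₜ[𝕜] n)) =
        indMk Y' Y ρN' ((MonoidAlgebra.single (y * b) (1 : 𝕜)) ⊗ₜ[𝕜] n)) :
    midRel X Y ρM ρI ≤ LinearMap.ker (beta0 X Y' Y ρM ρN' ρT₁ hρT₁ hp hY'Y) := by
  rw [midRel, Submodule.span_le]
  rintro z ⟨b, hb1, hb2, m, u, rfl⟩
  simp only [SetLike.mem_coe, LinearMap.mem_ker, map_sub, sub_eq_zero,
    beta0_apply]
  obtain ⟨v, rfl⟩ : ∃ v, indMk Y' Y ρN' v = u := Submodule.mkQ_surjective _ u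
  induction v using TensorProduct.induction_on with
  | zero => simp
  | add v₁ v₂ ih₁ ih₂ =>
    simp only [map_add, LinearMap.add_apply, ih₁, ih₂]
  | tmul f n =>
    induction f using MonoidAlgebra.induction_linear with
    | zero =>
      rw [show ((0 : MonoidAlgebra 𝕜 ↥Y) ⊗ₜ[𝕜] n) = 0 from TensorProduct.zero_tmul _ n]
      simp
    | add f₁ f₂ ih₁ ih₂ =>
      rw [TensorProduct.add_tmul]
      simp only [map_add, LinearMap.add_apply, ih₁, ih₂]
    | single y c =>
      have hsc : (MonoidAlgebra.single y c) ⊗ₜ[𝕜] n =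
          c • ((MonoidAlgebra.single y (1 : 𝕜)) ⊗ₜ[𝕜] n) := by
        rw [TensorProduct.smul_tmul']
        congr 1
        rw [MonoidAlgebra.smul_single', mul_one]
      rw [hsc]
      simp only [map_smul, LinearMap.smul_apply]
      congr 1
      rw [hρI (⟨(b, (1:K)), hb2⟩ : ↥Y) y n, betaB_mk, betaB_mk, betaE_single,
        betaE_single, one_smul, one_smul]
      exact psiC_shift X Y' Y ρM ρN' ρT₁ hρT₁ hp b hb1 hb2 y m n

/-- The inverse homomorphism `β`. -/
noncomputable def betaMap (hp : p1 Y ≤ p2 X) (hY'Y : Y' ≤ Y) (hρI : ∀ (y b : ↥Y) (n : N'),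
      ρI y (indMk Y' Y ρN' ((MonoidAlgebra.single b (1 : 𝕜)) ⊗ₜ[𝕜] n)) =
        indMk Y' Y ρN' ((MonoidAlgebra.single (y * b) (1 : 𝕜)) ⊗ₜ[𝕜] n)) :
    ExtTen X Y ρM ρI →ₗ[𝕜] Ind (comp X Y') (comp X Y) ρT₁ :=
  Submodule.liftQ _ (beta0 X Y' Y ρM ρN' ρT₁ hρT₁ hp hY'Y)
    (beta0_ker X Y' Y ρM ρN' ρI ρT₁ hρT₁ hp hY'Y hρI)


lemma betaMap_mk (hp : p1 Y ≤ p2 X) (hY'Y : Y' ≤ Y) (hρI : ∀ (y b : ↥Y) (n : N'),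
      ρI y (indMk Y' Y ρN' ((MonoidAlgebra.single b (1 : 𝕜)) ⊗ₜ[𝕜] n)) =
        indMk Y' Y ρN' ((MonoidAlgebra.single (y * b) (1 : 𝕜)) ⊗ₜ[𝕜] n))
    (w : M ⊗[𝕜] (Ind Y' Y ρN')) :
    betaMap X Y' Y ρM ρN' ρI ρT₁ hρT₁ hp hY'Y hρI (extMk X Y ρM ρI w) =
      beta0 X Y' Y ρM ρN' ρT₁ hρT₁ hp hY'Y w := rfl

include hρT₁ in
lemma beta_alpha (hp : p1 Y ≤ p2 X) (hρI : ∀ (y b : ↥Y) (n : N'),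
      ρI y (indMk Y' Y ρN' ((MonoidAlgebra.single b (1 : 𝕜)) ⊗ₜ[𝕜] n)) =
        indMk Y' Y ρN' ((MonoidAlgebra.single (y * b) (1 : 𝕜)) ⊗ₜ[𝕜] n))
    (hY'Y : Y' ≤ Y) (u : Ind (comp X Y') (comp X Y) ρT₁) :
    betaMap X Y' Y ρM ρN' ρI ρT₁ hρT₁ hp hY'Y hρI
      (alphaMap X Y' Y ρM ρN' ρI hρI hY'Y ρT₁ hρT₁ u) = u := by
  have core : ∀ (b : ↥(comp X Y)) (m : M) (n : N'),
      betaMap X Y' Y ρM ρN' ρI ρT₁ hρT₁ hp hY'Y hρI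
        (alphaMap X Y' Y ρM ρN' ρI hρI hY'Y ρT₁ hρT₁
          (indMk (comp X Y') (comp X Y) ρT₁ ((MonoidAlgebra.single b (1 : 𝕜)) ⊗ₜ[𝕜]
            (extMk X Y' ρM ρN' (m ⊗ₜ[𝕜] n))))) =
      indMk (comp X Y') (comp X Y) ρT₁ ((MonoidAlgebra.single b (1 : 𝕜)) ⊗ₜ[𝕜]
        (extMk X Y' ρM ρN' (m ⊗ₜ[𝕜] n))) := by
    intro b m n
    have hb1 := midH_mem1 X Y b
    have hb2 := midH_mem2 X Y b
    have spec := alphaMap_spec X Y' Y ρM ρN' ρI hρI hY'Y ρT₁ hρT₁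
      (b : G × K).1 (b : G × K).2 b.2 (midH X Y b) hb1 hb2 m n
    have ex : (⟨((b : G × K).1, (b : G × K).2), b.2⟩ : ↥(comp X Y)) = b := Subtype.ext rfl
    rw [ex] at spec
    rw [spec, betaMap_mk, beta0_apply, betaB_mk, betaE_single, one_smul]
    rw [psiC_eq X Y' Y ρM ρN' ρT₁ hρT₁ hp (⟨(midH X Y b, (b : G × K).2), hb2⟩ : ↥Y)
      (b : G × K).1 hb1]
    rw [psi0_apply]
    have eM : ρM ((⟨((b : G × K).1, midH X Y b), hb1⟩ : ↥X)⁻¹)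
        (ρM ⟨((b : G × K).1, midH X Y b), hb1⟩ m) = m := by
      rw [← Module.End.mul_apply, ← map_mul, inv_mul_cancel, map_one, Module.End.one_apply]
    rw [eM]
  have core2 : ∀ (b : ↥(comp X Y)) (t : ExtTen X Y' ρM ρN'),
      betaMap X Y' Y ρM ρN' ρI ρT₁ hρT₁ hp hY'Y hρI
        (alphaMap X Y' Y ρM ρN' ρI hρI hY'Y ρT₁ hρT₁
          (indMk (comp X Y') (comp X Y) ρT₁ ((MonoidAlgebra.single b (1 : 𝕜)) ⊗ₜ[𝕜] t))) =
      indMk (comp X Y') (comp X Y) ρT₁ ((MonoidAlgebra.single b (1 : 𝕜)) ⊗ₜ[𝕜] t) := by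
    intro b t
    obtain ⟨w, rfl⟩ : ∃ w, extMk X Y' ρM ρN' w = t := Submodule.mkQ_surjective _ t
    induction w using TensorProduct.induction_on with
    | zero =>
      rw [map_zero, show (MonoidAlgebra.single b (1 : 𝕜)) ⊗ₜ[𝕜]
        (0 : ExtTen X Y' ρM ρN') = 0 from TensorProduct.tmul_zero _ _]
      simp
    | add w₁ w₂ ih₁ ih₂ =>
      rw [map_add, TensorProduct.tmul_add]
      simp only [map_add, ih₁, ih₂]
    | tmul m n => exact core b m n
  obtain ⟨w, rfl⟩ : ∃ w, indMk (comp X Y') (comp X Y) ρT₁ w = u :=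
    Submodule.mkQ_surjective _ u
  induction w using TensorProduct.induction_on with
  | zero => simp
  | add w₁ w₂ ih₁ ih₂ => simp only [map_add, ih₁, ih₂]
  | tmul f t =>
    induction f using MonoidAlgebra.induction_linear with
    | zero =>
      rw [show ((0 : MonoidAlgebra 𝕜 ↥(comp X Y)) ⊗ₜ[𝕜] t) = 0 from
        TensorProduct.zero_tmul _ t]
      simp
    | add f₁ f₂ ih₁ ih₂ =>
      rw [TensorProduct.add_tmul]
      simp only [map_add, ih₁, ih₂]
    | single b c =>
      have hsc : (MonoidAlgebra.single b c) ⊗ₜ[𝕜] t =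
          c • ((MonoidAlgebra.single b (1 : 𝕜)) ⊗ₜ[𝕜] t) := by
        rw [TensorProduct.smul_tmul']
        congr 1
        rw [MonoidAlgebra.smul_single', mul_one]
      rw [hsc]
      simp only [map_smul, core2 b t]

include hρT₁ in
lemma alpha_beta (hp : p1 Y ≤ p2 X) (hρI : ∀ (y b : ↥Y) (n : N'),
      ρI y (indMk Y' Y ρN' ((MonoidAlgebra.single b (1 : 𝕜)) ⊗ₜ[𝕜] n)) =
        indMk Y' Y ρN' ((MonoidAlgebra.single (y * b) (1 : 𝕜)) ⊗ₜ[𝕜] n))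
    (hY'Y : Y' ≤ Y) (z : ExtTen X Y ρM ρI) :
    alphaMap X Y' Y ρM ρN' ρI hρI hY'Y ρT₁ hρT₁
      (betaMap X Y' Y ρM ρN' ρI ρT₁ hρT₁ hp hY'Y hρI z) = z := by
  have core : ∀ (m : M) (y : ↥Y) (n : N'),
      alphaMap X Y' Y ρM ρN' ρI hρI hY'Y ρT₁ hρT₁
        (betaMap X Y' Y ρM ρN' ρI ρT₁ hρT₁ hp hY'Y hρI
          (extMk X Y ρM ρI (m ⊗ₜ[𝕜]
            (indMk Y' Y ρN' ((MonoidAlgebra.single y (1 : 𝕜)) ⊗ₜ[𝕜] n))))) =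
      extMk X Y ρM ρI (m ⊗ₜ[𝕜]
        (indMk Y' Y ρN' ((MonoidAlgebra.single y (1 : 𝕜)) ⊗ₜ[𝕜] n))) := by
    intro m y n
    rw [betaMap_mk, beta0_apply, betaB_mk, betaE_single, one_smul]
    unfold psiC
    rw [psi0_apply]
    have spec := alphaMap_spec X Y' Y ρM ρN' ρI hρI hY'Y ρT₁ hρT₁
      (gch X Y hp y) (y : H × K).2 ⟨(y : H × K).1, gch_mem X Y hp y, y_mem Y y⟩
      (y : H × K).1 (gch_mem X Y hp y) (y_mem Y y)
      (ρM ((⟨(gch X Y hp y, (y : H × K).1), gch_mem X Y hp y⟩ : ↥X)⁻¹) m) n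
    rw [spec]
    have eM : ρM (⟨(gch X Y hp y, (y : H × K).1), gch_mem X Y hp y⟩ : ↥X)
        (ρM ((⟨(gch X Y hp y, (y : H × K).1), gch_mem X Y hp y⟩ : ↥X)⁻¹) m) = m := by
      rw [← Module.End.mul_apply, ← map_mul, mul_inv_cancel, map_one, Module.End.one_apply]
    rw [eM]
  have core2 : ∀ (m : M) (u : Ind Y' Y ρN'),
      alphaMap X Y' Y ρM ρN' ρI hρI hY'Y ρT₁ hρT₁
        (betaMap X Y' Y ρM ρN' ρI ρT₁ hρT₁ hp hY'Y hρI (extMk X Y ρM ρI (m ⊗ₜ[𝕜] u))) =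
      extMk X Y ρM ρI (m ⊗ₜ[𝕜] u) := by
    intro m u
    obtain ⟨v, rfl⟩ : ∃ v, indMk Y' Y ρN' v = u := Submodule.mkQ_surjective _ u
    induction v using TensorProduct.induction_on with
    | zero =>
      rw [map_zero, show m ⊗ₜ[𝕜] (0 : Ind Y' Y ρN') = 0 from TensorProduct.tmul_zero _ _]
      simp
    | add v₁ v₂ ih₁ ih₂ =>
      rw [map_add, TensorProduct.tmul_add]
      simp only [map_add, ih₁, ih₂]
    | tmul f n =>
      induction f using MonoidAlgebra.induction_linear with
      | zero =>
        rw [show ((0 : MonoidAlgebra 𝕜 ↥Y) ⊗ₜ[𝕜] n) = 0 from TensorProduct.zero_tmul _ n]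
        simp
      | add f₁ f₂ ih₁ ih₂ =>
        rw [TensorProduct.add_tmul]
        simp only [map_add, TensorProduct.tmul_add, ih₁, ih₂]
      | single y c =>
        have hsc : (MonoidAlgebra.single y c) ⊗ₜ[𝕜] n =
            c • ((MonoidAlgebra.single y (1 : 𝕜)) ⊗ₜ[𝕜] n) := by
          rw [TensorProduct.smul_tmul']
          congr 1
          rw [MonoidAlgebra.smul_single', mul_one]
        rw [hsc, map_smul]
        rw [show m ⊗ₜ[𝕜] (c • indMk Y' Y ρN' ((MonoidAlgebra.single y (1 : 𝕜)) ⊗ₜ[𝕜] n)) =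
          c • (m ⊗ₜ[𝕜] indMk Y' Y ρN' ((MonoidAlgebra.single y (1 : 𝕜)) ⊗ₜ[𝕜] n)) from
          TensorProduct.tmul_smul _ _ _]
        simp only [map_smul, core m y n]
  obtain ⟨w, rfl⟩ : ∃ w, extMk X Y ρM ρI w = z := Submodule.mkQ_surjective _ z
  induction w using TensorProduct.induction_on with
  | zero => simp
  | add w₁ w₂ ih₁ ih₂ => simp only [map_add, ih₁, ih₂]
  | tmul m u => exact core2 m u

include hρT₁ in
lemma alpha_bijective (hp : p1 Y ≤ p2 X) (hρI : ∀ (y b : ↥Y) (n : N'),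
      ρI y (indMk Y' Y ρN' ((MonoidAlgebra.single b (1 : 𝕜)) ⊗ₜ[𝕜] n)) =
        indMk Y' Y ρN' ((MonoidAlgebra.single (y * b) (1 : 𝕜)) ⊗ₜ[𝕜] n))
    (hY'Y : Y' ≤ Y) :
    Function.Bijective (alphaMap X Y' Y ρM ρN' ρI hρI hY'Y ρT₁ hρT₁) := by
  constructor
  · intro u v huv
    have h1 := beta_alpha X Y' Y ρM ρN' ρI ρT₁ hρT₁ hp hρI hY'Y u
    have h2 := beta_alpha X Y' Y ρM ρN' ρI ρT₁ hρT₁ hp hρI hY'Y v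
    rw [← h1, ← h2, huv]
  · intro z
    exact ⟨betaMap X Y' Y ρM ρN' ρI ρT₁ hρT₁ hp hY'Y hρI z,
      alpha_beta X Y' Y ρM ρN' ρI ρT₁ hρT₁ hp hρI hY'Y z⟩

end Alpha

/-- There is a natural `𝕜[X*Y]`-module homomorphism
`α₂ : Ind_{X*Y'}^{X*Y}(M ⊗^{X,Y'}_{𝕜H} N') → M ⊗^{X,Y}_{𝕜H} Ind_{Y'}^{Y}(N')`,
`(g,k)⊗(m⊗n') ↦ (g,h)m ⊗ ((h,k)⊗n')`, and if `p₁(Y) ≤ p₂(X)` then `α₂` is an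
isomorphism. -/
theorem stmt10 {𝕜 : Type*} [CommRing 𝕜]
    {G H K : Type*} [Group G] [Group H] [Group K] [Finite G] [Finite H] [Finite K]
    (X : Subgroup (G × H)) (Y' Y : Subgroup (H × K)) (hY'Y : Y' ≤ Y)
    {M N' : Type*} [AddCommGroup M] [Module 𝕜 M] [AddCommGroup N'] [Module 𝕜 N']
    (ρM : Representation 𝕜 ↥X M) (ρN' : Representation 𝕜 ↥Y' N')
    -- the `𝕜[X*Y']`-module structure on `M ⊗^{X,Y'}_{𝕜H} N'`
    (ρT₁ : Representation 𝕜 ↥(comp X Y') (ExtTen X Y' ρM ρN'))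
    (hρT₁ : ∀ (g : G) (k : K) (hgk : (g, k) ∈ comp X Y') (h : H)
      (h1 : (g, h) ∈ X) (h2 : (h, k) ∈ Y') (m : M) (n : N'),
      ρT₁ ⟨(g, k), hgk⟩ (extMk X Y' ρM ρN' (m ⊗ₜ[𝕜] n)) =
        extMk X Y' ρM ρN' ((ρM ⟨(g, h), h1⟩ m) ⊗ₜ[𝕜] (ρN' ⟨(h, k), h2⟩ n)))
    -- the `𝕜[X*Y]`-module structure on `Ind_{X*Y'}^{X*Y}(M ⊗^{X,Y'} N')`
    (ρS : Representation 𝕜 ↥(comp X Y) (Ind (comp X Y') (comp X Y) ρT₁))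
    (hρS : ∀ (x b : ↥(comp X Y)) (t : ExtTen X Y' ρM ρN'),
      ρS x (indMk (comp X Y') (comp X Y) ρT₁ ((MonoidAlgebra.single b (1 : 𝕜)) ⊗ₜ[𝕜] t)) =
        indMk (comp X Y') (comp X Y) ρT₁ ((MonoidAlgebra.single (x * b) (1 : 𝕜)) ⊗ₜ[𝕜] t))
    -- the `𝕜Y`-module structure on `Ind_{Y'}^{Y}(N')`
    (ρI : Representation 𝕜 ↥Y (Ind Y' Y ρN'))
    (hρI : ∀ (y b : ↥Y) (n : N'),
      ρI y (indMk Y' Y ρN' ((MonoidAlgebra.single b (1 : 𝕜)) ⊗ₜ[𝕜] n)) =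
        indMk Y' Y ρN' ((MonoidAlgebra.single (y * b) (1 : 𝕜)) ⊗ₜ[𝕜] n))
    -- the `𝕜[X*Y]`-module structure on `M ⊗^{X,Y}_{𝕜H} Ind_{Y'}^{Y}(N')`
    (ρT₂ : Representation 𝕜 ↥(comp X Y) (ExtTen X Y ρM ρI))
    (hρT₂ : ∀ (g : G) (k : K) (hgk : (g, k) ∈ comp X Y) (h : H)
      (h1 : (g, h) ∈ X) (h2 : (h, k) ∈ Y) (m : M) (u : Ind Y' Y ρN'),
      ρT₂ ⟨(g, k), hgk⟩ (extMk X Y ρM ρI (m ⊗ₜ[𝕜] u)) =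
        extMk X Y ρM ρI ((ρM ⟨(g, h), h1⟩ m) ⊗ₜ[𝕜] (ρI ⟨(h, k), h2⟩ u))) :
    ∃ α : Ind (comp X Y') (comp X Y) ρT₁ →ₗ[𝕜] ExtTen X Y ρM ρI,
      (∀ (g : G) (k : K) (hgk : (g, k) ∈ comp X Y) (h : H)
        (h1 : (g, h) ∈ X) (h2 : (h, k) ∈ Y) (m : M) (n : N'),
        α (indMk (comp X Y') (comp X Y) ρT₁
            ((MonoidAlgebra.single (⟨(g, k), hgk⟩ : ↥(comp X Y)) (1 : 𝕜)) ⊗ₜ[𝕜]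
              (extMk X Y' ρM ρN' (m ⊗ₜ[𝕜] n)))) =
          extMk X Y ρM ρI
            ((ρM ⟨(g, h), h1⟩ m) ⊗ₜ[𝕜]
              (indMk Y' Y ρN' ((MonoidAlgebra.single (⟨(h, k), h2⟩ : ↥Y) (1 : 𝕜)) ⊗ₜ[𝕜] n)))) ∧
      (∀ (x : ↥(comp X Y)) (u : Ind (comp X Y') (comp X Y) ρT₁),
        α (ρS x u) = ρT₂ x (α u)) ∧
      (p1 Y ≤ p2 X → Function.Bijective α) := by
  refine ⟨alphaMap X Y' Y ρM ρN' ρI hρI hY'Y ρT₁ hρT₁, ?_, ?_, ?_⟩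
  · intro g k hgk h h1 h2 m n
    exact alphaMap_spec X Y' Y ρM ρN' ρI hρI hY'Y ρT₁ hρT₁ g k hgk h h1 h2 m n
  · intro x u
    exact alpha_equivariant X Y' Y ρM ρN' ρI hρI hY'Y ρT₁ hρT₁ ρT₂ hρT₂ ρS hρS x u
  · intro hp
    exact alpha_bijective X Y' Y ρM ρN' ρI ρT₁ hρT₁ hp hρI hY'Y

end Stmt10
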